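/- Sufficiency direction of the main theorem (Theorem 3.6), cocycle formulation: let |δ| > 0 be a real number with |δ|² ∈ ℚ, let Λ ⊆ W be an additive subgroup spanning W as a real vector space, and let N ∈ ℚ, N > 0, be such that ω(t,t') := Im⟨t',t⟩/(N·|δ|) ∈ ℤ for all t,t' ∈ Λ; form the Heisenberg group Γ = ℤ ×_ω Λ with multiplication (a,t)(a',t') = (a+a'+ω(t,t'), t+t'). Let λ_1,…,λ_r ∈ W with ⟨λ_i,λ_i⟩ ∈ ℚ and a_1,…,a_r ∈ ℤ, and suppose the Chern cocycle c(t,t') := −|δ|·Σ_i a_i·Im F_{λ_i}(t,t') takes values in ℤ on Λ × Λ. If Σ_i a_i·[F_{λ_i}(t,t') − (⟨λ_i,λ_i⟩/n)·⟨t',t⟩] = 0 for all t,t' ∈ Λ, then there exist an integer m ≥ 1 and a function u : Γ → ℤ such that m·c(t,t') = u(g) + u(g') − u(g·g') for all g = (a,t), g' = (a',t') ∈ Γ; i.e. the Chern class of the corresponding local Heegner divisor is a torsion element of H²(Γ, ℤ). -/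

import Mathlib

open Complex

/-- The form `F_λ(x,y) = ⟨x,λ⟩⟨y,λ⟩ + ⟨λ,x⟩⟨y,λ⟩ (= 2Re(⟨x,λ⟩)·⟨y,λ⟩)`. -/
noncomputable def Fform {W : Type*} [AddCommGroup W] [Module ℂ W]
    (B : W →ₗ[ℂ] W →ₛₗ[starRingEnd ℂ] ℂ) (lam x y : W) : ℂ :=
  B x lam * B y lam + B lam x * B y lam

/-- Sufficiency direction of the main theorem, cocycle formulation: if the
torsion condition `Σᵢ aᵢ·[F_{λᵢ}(t,t') − (⟨λᵢ,λᵢ⟩/n)·⟨t',t⟩] = 0` holds on the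
lattice `Λ`, then some positive multiple of the Chern cocycle
`c(t,t') = −|δ|·Σᵢ aᵢ·Im F_{λᵢ}(t,t')` is a coboundary on the Heisenberg group
`Γ = ℤ ×_ω Λ`; i.e. the Chern class of the corresponding local Heegner divisor
is a torsion element of `H²(Γ,ℤ)`. -/
theorem main_theorem_sufficiency {W : Type*} [AddCommGroup W] [Module ℂ W]
    [Module ℝ W] [IsScalarTower ℝ ℂ W] [FiniteDimensional ℂ W]
    (n : ℕ) (hn : 1 ≤ n) (hdim : Module.finrank ℂ W = n)
    (B : W →ₗ[ℂ] W →ₛₗ[starRingEnd ℂ] ℂ)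
    (hherm : ∀ v w : W, B w v = starRingEnd ℂ (B v w))
    (hneg : ∀ w : W, w ≠ 0 → (B w w).re < 0)
    (d : ℝ) (hd : 0 < d) (hd2 : ∃ q : ℚ, (q : ℝ) = d ^ 2)
    (Λ : AddSubgroup W) (hspan : Submodule.span ℝ (Λ : Set W) = ⊤)
    (N : ℚ) (hN : 0 < N)
    (ωZ : Λ → Λ → ℤ)
    (hωZ : ∀ t t' : Λ, ((ωZ t t' : ℤ) : ℝ) = (B (t' : W) (t : W)).im / ((N : ℝ) * d))
    (r : ℕ) (lam : Fin r → W)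
    (hlam : ∀ i, ∃ q : ℚ, B (lam i) (lam i) = (q : ℂ))
    (a : Fin r → ℤ)
    (cZ : Λ → Λ → ℤ)
    (hcZ : ∀ t t' : Λ, ((cZ t t' : ℤ) : ℝ)
      = -d * ∑ i, (a i : ℝ) * (Fform B (lam i) (t : W) (t' : W)).im)
    (htors : ∀ t t' : Λ, ∑ i, (a i : ℂ) *
      (Fform B (lam i) (t : W) (t' : W)
        - (B (lam i) (lam i) / (n : ℂ)) * B (t' : W) (t : W)) = 0) :
    ∃ m : ℕ, 1 ≤ m ∧ ∃ u : ℤ × Λ → ℤ, ∀ g g' : ℤ × Λ,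
      (m : ℤ) * cZ g.2 g'.2
        = u g + u g' - u (g.1 + g'.1 + ωZ g.2 g'.2, g.2 + g'.2) := by

  obtain ⟨qd, hqd⟩ := hd2
  choose q hq using hlam
  set Q : ℚ := ∑ i, (a i) * q i with hQ
  set s : ℚ := -(Q * N * qd / n) with hs
  have hn' : (n : ℝ) ≠ 0 := by positivity
  have hNd : (N : ℝ) * d ≠ 0 := by positivity
  have key : ∀ t t' : Λ, ((cZ t t' : ℤ) : ℝ) = (s : ℝ) * ((ωZ t t' : ℤ) : ℝ) := by
    intro t t'
    have hQc : ((Q : ℂ)) = ∑ i, (a i : ℂ) * (q i : ℂ) := by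
      rw [hQ]; push_cast; ring
    have h2 : ∑ i, (a i : ℂ) * Fform B (lam i) (t : W) (t' : W)
        = ((((Q : ℝ) / (n : ℝ)) : ℝ) : ℂ) * B (t' : W) (t : W) := by
      have h1 := htors t t'
      have hsub : ∑ i, (a i : ℂ) * Fform B (lam i) (t : W) (t' : W)
          - ∑ i, (a i : ℂ) * ((B (lam i) (lam i) / (n : ℂ)) * B (t' : W) (t : W)) = 0 := by
        rw [← Finset.sum_sub_distrib]
        simpa [mul_sub] using h1
      have hsum : ∑ i, (a i : ℂ) * ((B (lam i) (lam i) / (n : ℂ)) * B (t' : W) (t : W))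
          = ((((Q : ℝ) / (n : ℝ)) : ℝ) : ℂ) * B (t' : W) (t : W) := by
        have hcast : ((((Q : ℝ) / (n : ℝ)) : ℝ) : ℂ) = (Q : ℂ) / (n : ℂ) := by
          push_cast; ring
        rw [hcast, hQc, Finset.sum_div, Finset.sum_mul]
        refine Finset.sum_congr rfl fun i _ => ?_
        rw [hq i]; ring
      rw [hsum] at hsub
      exact sub_eq_zero.mp hsub
    have h3 : ∑ i, (a i : ℝ) * (Fform B (lam i) (t : W) (t' : W)).im
        = ((Q : ℝ) / (n : ℝ)) * (B (t' : W) (t : W)).im := by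
      have := congrArg Complex.im h2
      simpa [Complex.im_sum, Complex.mul_im] using this
    have hB : (B (t' : W) (t : W)).im = ((ωZ t t' : ℤ) : ℝ) * ((N : ℝ) * d) := by
      rw [hωZ]; field_simp
    rw [hcZ t t', h3, hB, hs]
    push_cast
    rw [hqd]
    ring
  refine ⟨s.den, s.den_pos, fun g => -s.num * g.1, fun g g' => ?_⟩
  have hfin : ((s.den : ℤ) : ℝ) * ((cZ g.2 g'.2 : ℤ) : ℝ)
      = ((s.num : ℝ)) * ((ωZ g.2 g'.2 : ℤ) : ℝ) := by
    rw [key]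
    have : (s : ℝ) = (s.num : ℝ) / (s.den : ℝ) := by
      rw [Rat.cast_def]
    rw [this]
    have hden : (s.den : ℝ) ≠ 0 := by positivity
    field_simp
    rw [Int.cast_natCast]; ring
  have : (s.den : ℤ) * cZ g.2 g'.2 = s.num * ωZ g.2 g'.2 := by
    exact_mod_cast hfin
  rw [this]
  ring
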